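/- arXiv:1203.4600 — 2 statements merged into one kernel-verified Lean document; each statement's English description precedes it below -/
import Mathlib

section
/- Let P be a finite collection of points, S a finite collection of pairwise distinct 2-dimensional real algebraic surfaces in ℝ⁴ such that distinct surfaces intersect in finitely many points, and let I ⊆ {(p,S) : p ∈ S} be a set of incidences such that: each (p,S) ∈ I has p a smooth point of S, and whenever p lies on two distinct surfaces S, S′, the tangent planes satisfy T_p(S) ∩ T_p(S′) = {p}. Suppose V ⊊ ℝ⁴ is a real algebraic variety (so dim V ≤ 3) with S ⊆ V for every S ∈ S, and every (p,S) ∈ I has p a smooth point of V. Then |I| ≤ |P|; that is, for each point p ∈ P there is at most one surface S with (p,S) ∈ I. -/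
open MvPolynomial

/-- `p` is a smooth point of the `k`-dimensional real algebraic surface `S ⊆ ℝ⁴`:
near `p` the set `S` has a well-defined tangent space, a linear subspace of
dimension `k`. -/
def IsSmoothPointOfDim (S : Set (Fin 4 → ℝ)) (p : Fin 4 → ℝ) (k : ℕ) : Prop :=
  p ∈ S ∧ ∃ W : Submodule ℝ (Fin 4 → ℝ), Module.finrank ℝ W = k ∧
    tangentConeAt ℝ S p = (W : Set (Fin 4 → ℝ))

/-- The affine tangent plane of `S` at `p` (the translate of the tangent cone to `p`). -/
def TangentPlaneAt (S : Set (Fin 4 → ℝ)) (p : Fin 4 → ℝ) : Set (Fin 4 → ℝ) :=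
  {x | x - p ∈ tangentConeAt ℝ S p}

/-- If a family of 2-dimensional real algebraic surfaces in `ℝ⁴`, any two of which
meet in finitely many points, is entirely contained in a proper real algebraic
variety `V ⊊ ℝ⁴`, and `I` is an admissible collection of incidences (each incidence
occurs at a smooth point of the surface, tangent planes of distinct surfaces at a
common point meet only in that point, and each incidence occurs at a smooth point
of `V`), then `|I| ≤ |P|`. -/
theorem stmt_5 (P : Finset (Fin 4 → ℝ)) (𝒮 : Finset (Set (Fin 4 → ℝ)))
    -- each surface is a 2-dimensional real algebraic set
    (halg : ∀ s ∈ 𝒮, ∃ F : Set (MvPolynomial (Fin 4) ℝ),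
      s = {x | ∀ f ∈ F, MvPolynomial.eval x f = 0})
    -- distinct surfaces intersect in finitely many points
    (hfin : ∀ s ∈ 𝒮, ∀ s' ∈ 𝒮, s ≠ s' → (s ∩ s').Finite)
    (I : Set ((Fin 4 → ℝ) × Set (Fin 4 → ℝ)))
    (hI : ∀ ps ∈ I, ps.1 ∈ P ∧ ps.2 ∈ 𝒮 ∧ ps.1 ∈ ps.2)
    -- each incidence occurs at a smooth point of the (2-dimensional) surface
    (hsmooth : ∀ ps ∈ I, IsSmoothPointOfDim ps.2 ps.1 2)
    -- tangent planes of distinct surfaces at a common point meet only at that point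
    (htang : ∀ p s s', (p, s) ∈ I → (p, s') ∈ I → s ≠ s' →
      TangentPlaneAt s p ∩ TangentPlaneAt s' p = {p})
    -- `V` is a proper real algebraic subvariety of `ℝ⁴` containing every surface
    (V : Set (Fin 4 → ℝ)) (hVne : V ≠ Set.univ)
    (hValg : ∃ F : Set (MvPolynomial (Fin 4) ℝ),
      V = {x | ∀ f ∈ F, MvPolynomial.eval x f = 0})
    (hSV : ∀ s ∈ 𝒮, s ⊆ V)
    -- each incidence occurs at a smooth point of `V` (of dimension at most 3)
    (hVsmooth : ∀ ps ∈ I, ∃ k ≤ 3, IsSmoothPointOfDim V ps.1 k) :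
    I.ncard ≤ P.card := by
  classical
  have key : Set.InjOn Prod.fst I := by
    rintro ⟨p, s⟩ hps ⟨p', s'⟩ hps' (h : p = p')
    subst h
    by_contra hne
    have hne' : s ≠ s' := fun h => hne (by rw [h])
    obtain ⟨-, W1, hW1rank, hW1⟩ := hsmooth _ hps
    obtain ⟨-, W2, hW2rank, hW2⟩ := hsmooth _ hps'
    obtain ⟨k, hk3, -, W, hWrank, hW⟩ := hVsmooth _ hps
    have hle1 : W1 ≤ W := by
      intro x hx
      have : x ∈ (W1 : Set (Fin 4 → ℝ)) := hx
      rw [← hW1] at this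
      have := tangentConeAt_mono (hSV s (hI _ hps).2.1) this
      rwa [hW] at this
    have hle2 : W2 ≤ W := by
      intro x hx
      have : x ∈ (W2 : Set (Fin 4 → ℝ)) := hx
      rw [← hW2] at this
      have := tangentConeAt_mono (hSV s' (hI _ hps').2.1) this
      rwa [hW] at this
    have hsup : W1 ⊔ W2 ≤ W := sup_le hle1 hle2
    have hranksup : Module.finrank ℝ ↥(W1 ⊔ W2) ≤ 3 :=
      le_trans (Submodule.finrank_mono hsup) (by rw [hWrank]; exact hk3)
    have heq := Submodule.finrank_sup_add_finrank_inf_eq W1 W2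
    rw [hW1rank, hW2rank] at heq
    have hinf : 0 < Module.finrank ℝ ↥(W1 ⊓ W2) := by omega
    have : Nontrivial ↥(W1 ⊓ W2) := Module.nontrivial_of_finrank_pos hinf
    obtain ⟨v, hv0⟩ := exists_ne (0 : ↥(W1 ⊓ W2))
    have hv1 : (v : Fin 4 → ℝ) ∈ W1 := v.2.1
    have hv2 : (v : Fin 4 → ℝ) ∈ W2 := v.2.2
    have htp := htang p s s' hps hps' hne'
    have hmem : p + (v : Fin 4 → ℝ) ∈ TangentPlaneAt s p ∩ TangentPlaneAt s' p := by
      constructor <;> simp only [TangentPlaneAt, Set.mem_setOf_eq, add_sub_cancel_left]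
      · rw [hW1]; exact hv1
      · rw [hW2]; exact hv2
    rw [htp] at hmem
    have : (v : Fin 4 → ℝ) = 0 := by
      have h := Set.mem_singleton_iff.mp hmem
      have := congrArg (fun x => x - p) h
      simpa using this
    exact hv0 (Subtype.ext this)
  have hIfin : I.Finite :=
    Set.Finite.subset (Set.Finite.prod P.finite_toSet 𝒮.finite_toSet)
      (fun ps hps => ⟨(hI ps hps).1, (hI ps hps).2.1⟩)
  calc I.ncard = (Prod.fst '' I).ncard := (Set.ncard_image_of_injOn key).symm
    _ ≤ (P : Set (Fin 4 → ℝ)).ncard := by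
        refine Set.ncard_le_ncard ?_ P.finite_toSet
        rintro x ⟨ps, hps, rfl⟩
        exact (hI ps hps).1
    _ = P.card := Set.ncard_coe_finset P
end

section
/- Let P₁,…,P_d ∈ ℝ[x₁,…,x_d] be real polynomials of degrees D₁,…,D_d. Then the number of nonsingular intersection points of Z(P₁) ∩ ⋯ ∩ Z(P_d) (points where the gradients ∇P₁,…,∇P_d are linearly independent) is at most D₁·D₂⋯D_d. -/
open MvPolynomial

variable {d : ℕ}

noncomputable def Qa (P : Fin d → MvPolynomial (Fin d) ℝ) (D : Fin d → ℕ)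
    (α : Fin d →₀ ℕ) : MvPolynomial (Fin d) ℝ :=
  if h : ∃ j, D j ≤ α j then
    (monomial (α - Finsupp.single h.choose (D h.choose)) 1) * P h.choose
  else 0

lemma Qa_mem (P : Fin d → MvPolynomial (Fin d) ℝ) (D : Fin d → ℕ) (s : ℝ) (hs : s ≠ 0)
    (α : Fin d →₀ ℕ) (h : ∃ j, D j ≤ α j) :
    monomial α 1 + C s⁻¹ * Qa P D α ∈
      Ideal.span (Set.range (fun j => P j + C s * X j ^ D j)) := by
  rw [Qa, dif_pos h]
  set j := h.choose with hj
  have hle : Finsupp.single j (D j) ≤ α := by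
    rw [Finsupp.single_le_iff]; exact h.choose_spec
  set m1 : MvPolynomial (Fin d) ℝ := monomial (α - Finsupp.single j (D j)) 1 with hm1
  have key : monomial α 1 + C s⁻¹ * (m1 * P j)
      = C s⁻¹ * m1 * (P j + C s * X j ^ D j) := by
    have hmono : m1 * (monomial (Finsupp.single j (D j)) 1 : MvPolynomial (Fin d) ℝ)
        = monomial α 1 := by
      rw [hm1, monomial_mul, one_mul, tsub_add_cancel_of_le hle]
    have h2 : C s⁻¹ * m1 * (C s * X j ^ D j) = monomial α 1 := by
      rw [MvPolynomial.X_pow_eq_monomial]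
      have : C s⁻¹ * m1 * (C s * monomial (Finsupp.single j (D j)) 1)
          = (C s⁻¹ * C s) * (m1 * monomial (Finsupp.single j (D j)) 1) := by ring
      rw [this, ← C_mul, inv_mul_cancel₀ hs, C_1, one_mul, hmono]
    rw [mul_add, h2]; ring
  rw [key]
  exact Ideal.mul_mem_left _ _ (Ideal.subset_span ⟨j, rfl⟩)

lemma Qa_totalDegree (P : Fin d → MvPolynomial (Fin d) ℝ) (D : Fin d → ℕ)
    (hdeg : ∀ j, (P j).totalDegree ≤ D j) (α : Fin d →₀ ℕ) :
    (Qa P D α).totalDegree ≤ α.sum fun _ n => n := by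
  rw [Qa]
  split
  · next h =>
    set j := h.choose with hj
    have hle : Finsupp.single j (D j) ≤ α := by
      rw [Finsupp.single_le_iff]; exact h.choose_spec
    refine le_trans (totalDegree_mul _ _) ?_
    have hsum : ∀ β : Fin d →₀ ℕ, (β.sum fun _ n => n) = ∑ i, β i := by
      intro β; exact Finsupp.sum_fintype _ _ (fun _ => rfl)
    have h1 : (monomial (α - Finsupp.single j (D j)) (1:ℝ)).totalDegree
        ≤ (∑ i, α i) - D j := by
      refine le_trans (totalDegree_monomial_le _ _) ?_
      have hsum2 : ((α - Finsupp.single j (D j)).sum fun _ => id) = ∑ i, (α - Finsupp.single j (D j)) i :=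
        Finsupp.sum_fintype _ _ (fun _ => rfl)
      rw [hsum2]
      have heq : ∀ i, (α - Finsupp.single j (D j)) i = α i - Finsupp.single j (D j) i :=
        fun i => rfl
      calc ∑ i, (α - Finsupp.single j (D j)) i
          = ∑ i, (α i - Finsupp.single j (D j) i) := by rfl
        _ = (∑ i, α i) - ∑ i, Finsupp.single j (D j) i := by
            rw [Finset.sum_tsub_distrib]
            intro i _; exact Finsupp.le_def.mp hle i
        _ = (∑ i, α i) - D j := by
            have : ∑ i, Finsupp.single j (D j) i = D j := by
              rw [Finset.sum_eq_single j]
              · simp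
              · intro b _ hb; simp [Finsupp.single_eq_of_ne' (Ne.symm hb)]
              · intro hb; exact absurd (Finset.mem_univ j) hb
            rw [this]
        _ ≤ (∑ i, α i) - D j := le_refl _
    have hDs : D j ≤ ∑ i, α i := by
      calc D j ≤ α j := h.choose_spec
        _ ≤ ∑ i, α i := Finset.single_le_sum (fun _ _ => Nat.zero_le _) (Finset.mem_univ j)
    rw [hsum]
    have := hdeg j
    omega
  · simp

noncomputable def NBset (D : Fin d → ℕ) (δ : ℕ) : Finset (Fin d →₀ ℕ) :=
  (Finset.Iic (Finsupp.equivFunOnFinite.symm fun _ => δ)).filter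
    (fun α => ((α.sum fun _ n => n) ≤ δ ∧ ∃ j, D j ≤ α j))

lemma mem_NBset {D : Fin d → ℕ} {δ : ℕ} {α : Fin d →₀ ℕ} :
    α ∈ NBset D δ ↔ ((α.sum fun _ n => n) ≤ δ ∧ ∃ j, D j ≤ α j) := by
  rw [NBset, Finset.mem_filter, and_iff_right_iff_imp]
  rintro ⟨hsum, -⟩
  rw [Finset.mem_Iic, Finsupp.le_def]
  intro i
  have h1 : α i ≤ α.sum fun _ n => n := by
    rw [Finsupp.sum_fintype _ _ (fun _ => rfl)]
    exact Finset.single_le_sum (fun _ _ => Nat.zero_le _) (Finset.mem_univ i)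
  simpa using le_trans h1 hsum

lemma coeff_sum_monomial_NB (NB : Finset (Fin d →₀ ℕ)) (p : MvPolynomial (Fin d) ℝ)
    (γ : Fin d →₀ ℕ) :
    coeff γ (∑ β : ↥NB, (coeff (β:Fin d →₀ ℕ) p) • monomial (β:Fin d →₀ ℕ) (1:ℝ))
      = if γ ∈ NB then coeff γ p else 0 := by
  classical
  rw [coeff_sum]
  simp only [coeff_smul, coeff_monomial, smul_eq_mul, mul_ite, mul_one, mul_zero]
  by_cases h : γ ∈ NB
  · rw [if_pos h, Finset.sum_eq_single (⟨γ, h⟩ : ↥NB)]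
    · simp
    · intro b _ hb
      rw [if_neg]; intro hc; exact hb (Subtype.ext hc)
    · intro hmem; exact absurd (Finset.mem_univ _) hmem
  · rw [if_neg h, Finset.sum_eq_zero]
    intro b _
    rw [if_neg]; intro hc; exact h (hc ▸ b.2)

/-- A polynomial whose support is in the box is in the span of box monomials. -/
lemma mem_spanBox {D : Fin d → ℕ} {p : MvPolynomial (Fin d) ℝ}
    (h : ∀ γ ∈ p.support, ∀ j, γ j < D j) :
    p ∈ Submodule.span ℝ ((fun β => monomial β (1:ℝ)) '' {β | ∀ j, β j < D j}) := by
  rw [p.as_sum]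
  refine Submodule.sum_mem _ (fun γ hγ => ?_)
  have : monomial γ (coeff γ p) = (coeff γ p) • monomial γ (1:ℝ) := by
    rw [smul_monomial, smul_eq_mul, mul_one]
  rw [this]
  exact Submodule.smul_mem _ _ (Submodule.subset_span ⟨γ, h γ hγ, rfl⟩)

theorem span_box (P : Fin d → MvPolynomial (Fin d) ℝ) (D : Fin d → ℕ)
    (hdeg : ∀ j, (P j).totalDegree ≤ D j) (δ : ℕ) :
    ∃ q : Polynomial ℝ, q ≠ 0 ∧ ∀ s : ℝ, s ≠ 0 → q.eval s ≠ 0 →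
      ∀ f : MvPolynomial (Fin d) ℝ, f.totalDegree ≤ δ →
        f ∈ (Ideal.span (Set.range fun j => P j + C s * X j ^ D j)).restrictScalars ℝ ⊔
            Submodule.span ℝ ((fun β => monomial β (1:ℝ)) '' {β | ∀ j, β j < D j}) := by
  classical
  set NB := NBset D δ with hNB
  set R : Matrix ↥NB ↥NB ℝ := fun β α => coeff (β : Fin d →₀ ℕ) (Qa P D α) with hR
  refine ⟨Matrix.charpoly (-R), (Matrix.charpoly_monic _).ne_zero, ?_⟩
  intro s hs hqs f hf
  -- determinant of s • 1 + R is nonzero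
  have hdet : (s • (1 : Matrix ↥NB ↥NB ℝ) + R).det ≠ 0 := by
    have : (Matrix.charpoly (-R)).eval s = (s • (1 : Matrix ↥NB ↥NB ℝ) + R).det := by
      rw [Matrix.charpoly, ← Polynomial.coe_evalRingHom, RingHom.map_det]
      congr 1
      ext i j
      by_cases h : i = j
      · subst h; simp [Matrix.charmatrix_apply_eq, Matrix.one_apply]
      · simp [Matrix.charmatrix_apply_ne _ _ _ h, Matrix.one_apply, h]
    rwa [this] at hqs
  set M' : Matrix ↥NB ↥NB ℝ := 1 + s⁻¹ • R with hM'
  have hdetM' : M'.det ≠ 0 := by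
    have h1 : M' = s⁻¹ • (s • (1 : Matrix ↥NB ↥NB ℝ) + R) := by
      rw [smul_add, smul_smul, inv_mul_cancel₀ hs, one_smul]
    rw [h1, Matrix.det_smul]
    exact mul_ne_zero (pow_ne_zero _ (inv_ne_zero hs)) hdet
  have hM'unit : IsUnit M'.det := isUnit_iff_ne_zero.mpr hdetM'
  -- the two submodules
  set I' := (Ideal.span (Set.range fun j => P j + C s * X j ^ D j)).restrictScalars ℝ with hI'
  set B' := Submodule.span ℝ ((fun β => monomial β (1:ℝ)) '' {β | ∀ j, β j < D j}) with hB'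
  -- key: image of mulVec by M' lands in I' ⊔ B'
  have key : ∀ c : ↥NB → ℝ,
      (∑ α : ↥NB, (M'.mulVec c α) • monomial (α : Fin d →₀ ℕ) (1:ℝ)) ∈ I' ⊔ B' := by
    intro c
    have hmem1 : (∑ α : ↥NB, c α • (monomial (α : Fin d →₀ ℕ) (1:ℝ)
        + C s⁻¹ * Qa P D α)) ∈ I' := by
      refine Submodule.sum_mem _ (fun α _ => Submodule.smul_mem _ _ ?_)
      rw [hI', Submodule.restrictScalars_mem]
      exact Qa_mem P D s hs _ (mem_NBset.mp α.2).2
    -- decompose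
    have hdecomp : ∀ α : ↥NB, Qa P D α =
        (∑ β : ↥NB, (R β α) • monomial (β : Fin d →₀ ℕ) (1:ℝ)) +
        (Qa P D α - ∑ β : ↥NB, (R β α) • monomial (β : Fin d →₀ ℕ) (1:ℝ)) := by
      intro α; ring
    have hboxpart : ∀ α : ↥NB,
        (Qa P D α - ∑ β : ↥NB, (R β α) • monomial (β : Fin d →₀ ℕ) (1:ℝ)) ∈ B' := by
      intro α
      refine mem_spanBox (fun γ hγ j => ?_)
      have hcoeff := coeff_sum_monomial_NB NB (Qa P D α) γ
      rw [MvPolynomial.mem_support_iff] at hγ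
      rw [coeff_sub] at hγ
      by_cases h : γ ∈ NB
      · exfalso; apply hγ; rw [hR] at *; rw [hcoeff, if_pos h, sub_self]
      · rw [hcoeff, if_neg h, sub_zero] at hγ
        have hsup : γ ∈ (Qa P D α).support := MvPolynomial.mem_support_iff.mpr hγ
        have hdle : (γ.sum fun _ n => n) ≤ δ := by
          refine le_trans (le_trans (le_totalDegree hsup) (Qa_totalDegree P D hdeg _)) ?_
          exact (mem_NBset.mp α.2).1
        by_contra hcon
        exact h (mem_NBset.mpr ⟨hdle, ⟨j, not_lt.mp hcon⟩⟩)
    -- notation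
    set Sc := ∑ α : ↥NB, c α • monomial (α : Fin d →₀ ℕ) (1:ℝ) with hSc
    set SQ := ∑ α : ↥NB, (s⁻¹ * c α) • Qa P D (α : Fin d →₀ ℕ) with hSQ
    set SR := ∑ α : ↥NB, (s⁻¹ * c α) •
        (∑ β : ↥NB, (R β α) • monomial (β : Fin d →₀ ℕ) (1:ℝ)) with hSR
    have hS1 : (∑ α : ↥NB, c α • (monomial (α : Fin d →₀ ℕ) (1:ℝ) + C s⁻¹ * Qa P D α))
        = Sc + SQ := by
      rw [hSc, hSQ, ← Finset.sum_add_distrib]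
      refine Finset.sum_congr rfl (fun α _ => ?_)
      rw [smul_add]
      congr 1
      rw [← smul_eq_C_mul, smul_smul, mul_comm]
    have hswap : (∑ α : ↥NB, (s⁻¹ * Matrix.mulVec R c α) • monomial (α : Fin d →₀ ℕ) (1:ℝ))
        = SR := by
      rw [hSR]
      have hR1 : ∀ β : ↥NB, (s⁻¹ * c β) •
          (∑ γ : ↥NB, (R γ β) • monomial (γ : Fin d →₀ ℕ) (1:ℝ))
          = ∑ γ : ↥NB, ((s⁻¹ * c β) * R γ β) • monomial (γ : Fin d →₀ ℕ) (1:ℝ) := by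
        intro β
        rw [Finset.smul_sum]
        exact Finset.sum_congr rfl (fun γ _ => by rw [smul_smul])
      simp only [hR1]
      rw [Finset.sum_comm]
      refine Finset.sum_congr rfl (fun γ _ => ?_)
      rw [← Finset.sum_smul]
      congr 1
      rw [Matrix.mulVec, dotProduct, Finset.mul_sum]
      exact Finset.sum_congr rfl (fun β _ => by ring)
    have hE : (∑ α : ↥NB, (M'.mulVec c α) • monomial (α : Fin d →₀ ℕ) (1:ℝ))
        = (∑ α : ↥NB, c α • (monomial (α : Fin d →₀ ℕ) (1:ℝ) + C s⁻¹ * Qa P D α))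
          - (∑ α : ↥NB, (s⁻¹ * c α) •
              (Qa P D (α : Fin d →₀ ℕ)
                - ∑ β : ↥NB, (R β α) • monomial (β : Fin d →₀ ℕ) (1:ℝ))) := by
      have h1 : ∀ α : ↥NB, M'.mulVec c α = c α + s⁻¹ * Matrix.mulVec R c α := by
        intro α
        rw [hM', Matrix.add_mulVec, Matrix.one_mulVec, Matrix.smul_mulVec]
        simp
      have h2 : (∑ α : ↥NB, (M'.mulVec c α) • monomial (α : Fin d →₀ ℕ) (1:ℝ))
          = Sc + ∑ α : ↥NB, (s⁻¹ * Matrix.mulVec R c α) • monomial (α : Fin d →₀ ℕ) (1:ℝ) := by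
        rw [hSc, ← Finset.sum_add_distrib]
        exact Finset.sum_congr rfl (fun α _ => by rw [h1, add_smul])
      have h3 : (∑ α : ↥NB, (s⁻¹ * c α) •
          (Qa P D (α : Fin d →₀ ℕ)
            - ∑ β : ↥NB, (R β α) • monomial (β : Fin d →₀ ℕ) (1:ℝ))) = SQ - SR := by
        rw [hSQ, hSR, ← Finset.sum_sub_distrib]
        exact Finset.sum_congr rfl (fun α _ => by rw [smul_sub])
      rw [h2, h3, hS1, hswap]
      abel
    rw [hE, hS1]
    have hWmem : (∑ α : ↥NB, (s⁻¹ * c α) •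
        (Qa P D (α : Fin d →₀ ℕ)
          - ∑ β : ↥NB, (R β α) • monomial (β : Fin d →₀ ℕ) (1:ℝ))) ∈ B' :=
      Submodule.sum_mem _ (fun α _ => Submodule.smul_mem _ _ (hboxpart α))
    rw [← hS1]
    exact Submodule.sub_mem _ (Submodule.mem_sup_left hmem1) (Submodule.mem_sup_right hWmem)
  -- now reduce any monomial of degree ≤ δ
  have hmono : ∀ α : Fin d →₀ ℕ, (α.sum fun _ n => n) ≤ δ →
      monomial α (1:ℝ) ∈ I' ⊔ B' := by
    intro α hα
    by_cases hbox : ∀ j, α j < D j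
    · exact Submodule.mem_sup_right (Submodule.subset_span ⟨α, hbox, rfl⟩)
    · have hαNB : α ∈ NB := by
        refine mem_NBset.mpr ⟨hα, ?_⟩
        push_neg at hbox
        obtain ⟨j, hj⟩ := hbox
        exact ⟨j, hj⟩
      -- solve M'.mulVec c = Pi.single ⟨α, hαNB⟩ 1
      obtain ⟨c, hc⟩ : ∃ c : ↥NB → ℝ, M'.mulVec c = (Pi.single (⟨α, hαNB⟩ : ↥NB) (1:ℝ) : ↥NB → ℝ) := by
        refine ⟨(M'⁻¹).mulVec (Pi.single (⟨α, hαNB⟩ : ↥NB) (1:ℝ) : ↥NB → ℝ), ?_⟩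
        rw [Matrix.mulVec_mulVec, Matrix.mul_nonsing_inv _ hM'unit, Matrix.one_mulVec]
      have := key c
      rw [hc] at this
      have hsingle : (∑ β : ↥NB, ((Pi.single (⟨α, hαNB⟩ : ↥NB) (1:ℝ) : ↥NB → ℝ) β) •
          monomial (β : Fin d →₀ ℕ) (1:ℝ)) = monomial α (1:ℝ) := by
        rw [Finset.sum_eq_single (⟨α, hαNB⟩ : ↥NB)]
        · simp
        · intro b _ hb; rw [Pi.single_eq_of_ne hb, zero_smul]
        · intro hmem; exact absurd (Finset.mem_univ _) hmem
      rwa [hsingle] at this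
  -- finish: decompose f into monomials
  rw [f.as_sum]
  refine Submodule.sum_mem _ (fun γ hγ => ?_)
  have h1 : monomial γ (coeff γ f) = (coeff γ f) • monomial γ (1:ℝ) := by
    rw [smul_monomial, smul_eq_mul, mul_one]
  rw [h1]
  exact Submodule.smul_mem _ _ (hmono γ (le_trans (le_totalDegree hγ) hf))

lemma totalDegree_factor (i : Fin d) (a b : ℝ) :
    (C b * (X i - C a) : MvPolynomial (Fin d) ℝ).totalDegree ≤ 1 := by
  refine le_trans (totalDegree_mul _ _) ?_
  rw [totalDegree_C, zero_add]
  exact le_trans (totalDegree_sub_C_le _ _) (le_of_eq (totalDegree_X _))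

/-- Lagrange-type interpolation on a finite set of points. -/
lemma interp (T : Finset (Fin d → ℝ)) (p : Fin d → ℝ) (hp : p ∈ T) :
    ∃ f : MvPolynomial (Fin d) ℝ, f.totalDegree ≤ T.card - 1 ∧ eval p f = 1 ∧
      ∀ x ∈ T, x ≠ p → eval x f = 0 := by
  classical
  have hfactor : ∀ y : Fin d → ℝ, y ≠ p → ∃ g : MvPolynomial (Fin d) ℝ,
      g.totalDegree ≤ 1 ∧ eval p g = 1 ∧ eval y g = 0 := by
    intro y hy
    obtain ⟨i, hi⟩ := Function.ne_iff.mp hy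
    refine ⟨C ((p i - y i)⁻¹) * (X i - C (y i)), totalDegree_factor i _ _, ?_, ?_⟩
    · simp only [eval_mul, eval_C, eval_sub, eval_X]
      exact inv_mul_cancel₀ (sub_ne_zero.mpr (fun h => hi (by rw [h])))
    · simp
  choose g hg1 hg2 hg3 using hfactor
  refine ⟨∏ y ∈ (T.erase p).attach, g y.1 (Finset.ne_of_mem_erase y.2), ?_, ?_, ?_⟩
  · refine le_trans (totalDegree_finset_prod _ _) ?_
    refine le_trans (Finset.sum_le_card_nsmul _ _ 1 (fun y _ => hg1 _ _)) ?_
    simp [Finset.card_erase_of_mem hp]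
  · rw [map_prod, Finset.prod_eq_one]
    intro y _; exact hg2 _ _
  · intro x hx hxp
    rw [map_prod]
    refine Finset.prod_eq_zero (Finset.mem_attach _ ⟨x, Finset.mem_erase.mpr ⟨hxp, hx⟩⟩) ?_
    exact hg3 _ _

/-- Counting lemma : if all polys in `J` vanish on `T` and every low-degree polynomial
is in `J ⊔ span(box monomials)`, then `|T| ≤ ∏ D j`. -/
lemma count_le (T : Finset (Fin d → ℝ)) (D : Fin d → ℕ)
    (J : Submodule ℝ (MvPolynomial (Fin d) ℝ))
    (hJ : ∀ g ∈ J, ∀ x ∈ T, eval x g = 0)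
    (hspan : ∀ f : MvPolynomial (Fin d) ℝ, f.totalDegree ≤ T.card - 1 →
      f ∈ J ⊔ Submodule.span ℝ ((fun β => monomial β (1:ℝ)) '' {β | ∀ j, β j < D j})) :
    T.card ≤ ∏ j, D j := by
  classical
  set ev : MvPolynomial (Fin d) ℝ →ₗ[ℝ] (↥T → ℝ) :=
    { toFun := fun f x => eval (x : Fin d → ℝ) f
      map_add' := by intro f g; funext x; simp
      map_smul' := by intro c f; funext x; simp } with hev
  set BoxF : Finset (Fin d →₀ ℕ) :=
    (Finset.Iic (Finsupp.equivFunOnFinite.symm fun j => D j - 1)).filter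
      (fun β => ∀ j, β j < D j) with hBoxFdef
  have hBoxF : ∀ β : Fin d →₀ ℕ, β ∈ BoxF ↔ ∀ j, β j < D j := by
    intro β
    rw [hBoxFdef, Finset.mem_filter, and_iff_right_iff_imp]
    intro hb
    rw [Finset.mem_Iic, Finsupp.le_def]
    intro i
    have := hb i
    simp only [Finsupp.coe_equivFunOnFinite_symm]
    omega
  have hcard : BoxF.card ≤ ∏ j, D j := by
    have hinj : Set.InjOn (fun (β : Fin d →₀ ℕ) (j : Fin d) => β j) ↑BoxF := by
      intro β _ γ _ h
      exact Finsupp.ext (congrFun h)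
    have hmaps : ∀ β ∈ BoxF, (fun j => β j) ∈ Fintype.piFinset (fun j => Finset.range (D j)) := by
      intro β hβ
      rw [Fintype.mem_piFinset]
      intro j
      rw [Finset.mem_range]
      exact (hBoxF β).mp hβ j
    calc BoxF.card ≤ (Fintype.piFinset (fun j => Finset.range (D j))).card :=
          Finset.card_le_card_of_injOn _ hmaps hinj
      _ = ∏ j, D j := by rw [Fintype.card_piFinset]; simp
  set SF : Finset (↥T → ℝ) := BoxF.image (fun β => ev (monomial β 1)) with hSF
  have himg : ev '' ((fun β => monomial β (1:ℝ)) '' {β | ∀ j, β j < D j}) = ↑SF := by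
    ext v
    simp only [hSF, Finset.coe_image, Set.mem_image, Finset.mem_coe, Set.mem_setOf_eq]
    constructor
    · rintro ⟨f, ⟨β, hβ, rfl⟩, rfl⟩
      exact ⟨β, (hBoxF β).mpr hβ, rfl⟩
    · rintro ⟨β, hβ, rfl⟩
      exact ⟨monomial β 1, ⟨β, (hBoxF β).mp hβ, rfl⟩, rfl⟩
  have hsingle : ∀ x : ↥T, (Pi.single x (1:ℝ) : ↥T → ℝ) ∈ Submodule.span ℝ (↑SF : Set (↥T → ℝ)) := by
    intro x
    obtain ⟨f, hdf, hf1, hf0⟩ := interp T x x.2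
    have hevf : ev f = Pi.single x (1:ℝ) := by
      funext y
      by_cases h : y = x
      · subst h; simpa [hev] using hf1
      · rw [Pi.single_eq_of_ne h]
        simpa [hev] using hf0 y y.2 (fun hc => h (Subtype.ext hc))
    obtain ⟨u, hu, b, hb, huv⟩ := Submodule.mem_sup.mp (hspan f hdf)
    have hevu : ev u = 0 := by
      funext y
      simpa [hev] using hJ u hu y y.2
    have : ev f = ev b := by rw [← huv, map_add, hevu, zero_add]
    rw [← hevf, this]
    have : ev b ∈ Submodule.map ev (Submodule.span ℝ
        ((fun β => monomial β (1:ℝ)) '' {β | ∀ j, β j < D j})) :=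
      Submodule.mem_map_of_mem hb
    rw [Submodule.map_span, himg] at this
    exact this
  have hspantop : Submodule.span ℝ (↑SF : Set (↥T → ℝ)) = ⊤ := by
    rw [eq_top_iff]
    intro v _
    have hv : v = ∑ x : ↥T, v x • (Pi.single x (1:ℝ) : ↥T → ℝ) := by
      funext y
      rw [Finset.sum_apply]
      rw [Finset.sum_eq_single y]
      · rw [Pi.smul_apply, Pi.single_eq_same, smul_eq_mul, mul_one]
      · intro b _ hb
        rw [Pi.smul_apply, Pi.single_eq_of_ne (Ne.symm hb), smul_eq_mul, mul_zero]
      · intro hy; exact absurd (Finset.mem_univ _) hy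
    rw [hv]
    exact Submodule.sum_mem _ (fun x _ => Submodule.smul_mem _ _ (hsingle x))
  have h1 : T.card = Module.finrank ℝ (↥T → ℝ) := by
    rw [Module.finrank_fintype_fun_eq_card, Fintype.card_coe]
  have h2 : Module.finrank ℝ (↥T → ℝ) ≤ SF.card := by
    have := finrank_span_finset_le_card (R := ℝ) SF
    rw [Set.finrank, hspantop, finrank_top] at this
    exact this
  calc T.card = Module.finrank ℝ (↥T → ℝ) := h1
    _ ≤ SF.card := h2
    _ ≤ BoxF.card := Finset.card_image_le
    _ ≤ ∏ j, D j := hcard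



noncomputable def evalDeriv (p : MvPolynomial (Fin d) ℝ) (a : Fin d → ℝ) :
    (Fin d → ℝ) →L[ℝ] ℝ :=
  ∑ k, (eval a (pderiv k p)) • (ContinuousLinearMap.proj k : (Fin d → ℝ) →L[ℝ] ℝ)

lemma hasStrictFDerivAt_mveval (p : MvPolynomial (Fin d) ℝ) (a : Fin d → ℝ) :
    HasStrictFDerivAt (fun y : Fin d → ℝ => eval y p) (evalDeriv p a) a := by
  induction p using MvPolynomial.induction_on with
  | C r =>
      have : evalDeriv (C r : MvPolynomial (Fin d) ℝ) a = 0 := by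
        rw [evalDeriv]
        simp
      rw [this]
      simpa using hasStrictFDerivAt_const (𝕜 := ℝ) r a
  | add p q hp hq =>
      have : evalDeriv (p + q) a = evalDeriv p a + evalDeriv q a := by
        rw [evalDeriv, evalDeriv, evalDeriv, ← Finset.sum_add_distrib]
        refine Finset.sum_congr rfl (fun k _ => ?_)
        rw [map_add, map_add, add_smul]
      rw [this]
      have hpq := hp.add hq
      have hfun : (fun y : Fin d → ℝ => eval y (p + q))
          = (fun y => eval y p) + (fun y => eval y q) := by
        funext y; simp
      rw [hfun]; exact hpq
  | mul_X p i hp =>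
      have hXi : HasStrictFDerivAt (fun y : Fin d → ℝ => y i)
          (ContinuousLinearMap.proj i : (Fin d → ℝ) →L[ℝ] ℝ) a :=
        (ContinuousLinearMap.proj i : (Fin d → ℝ) →L[ℝ] ℝ).hasStrictFDerivAt
      have hmul := hp.mul hXi
      have heq : (fun y : Fin d → ℝ => eval y (p * X i))
          = fun y => (eval y p) * (y i) := by
        funext y; simp
      have hder : evalDeriv (p * X i) a
          = (eval a p) • (ContinuousLinearMap.proj i : (Fin d → ℝ) →L[ℝ] ℝ)
            + (a i) • evalDeriv p a := by
        rw [evalDeriv, evalDeriv]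
        ext v
        simp only [ContinuousLinearMap.add_apply, ContinuousLinearMap.smul_apply,
          ContinuousLinearMap.sum_apply, ContinuousLinearMap.proj_apply, smul_eq_mul,
          Finset.mul_sum]
        have hterm : ∀ k, (eval a) ((pderiv k) (p * X i)) * v k
            = (if i = k then (eval a) p * v k else 0) + a i * ((eval a) ((pderiv k) p) * v k) := by
          intro k
          rw [pderiv_mul, pderiv_X]
          by_cases h : i = k
          · subst h; simp [eval_X]; ring
          · simp [h, eval_X]; ring
        simp only [hterm]
        rw [Finset.sum_add_distrib, Finset.sum_ite_eq (Finset.univ) i (fun k => (eval a) p * v k)]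
        simp
      rw [heq, hder]
      exact hmul

lemma eq_zero_of_dot_rows (g : Fin d → Fin d → ℝ) (hind : LinearIndependent ℝ g)
    (v : Fin d → ℝ) (h : ∀ j, dotProduct (g j) v = 0) : v = 0 := by
  have hspan : Submodule.span ℝ (Set.range g) = ⊤ := by
    refine hind.span_eq_top_of_card_eq_finrank' ?_
    rw [Module.finrank_fintype_fun_eq_card, Fintype.card_fin]
  have hv : v ∈ Submodule.span ℝ (Set.range g) := by rw [hspan]; trivial
  obtain ⟨c, hc⟩ := (Submodule.mem_span_range_iff_exists_fun ℝ).mp hv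
  have hzero : dotProduct v v = 0 := by
    have h1 : dotProduct v v = ∑ k, (∑ i, c i • g i) k * v k := by
      rw [dotProduct]
      exact Finset.sum_congr rfl (fun k _ => by rw [congrFun hc k])
    have h2 : ∀ k, (∑ i, c i • g i) k * v k = ∑ i, c i * (g i k * v k) := by
      intro k
      rw [Finset.sum_apply, Finset.sum_mul]
      exact Finset.sum_congr rfl (fun i _ => by simp [mul_assoc])
    rw [h1]
    simp only [h2]
    rw [Finset.sum_comm]
    refine Finset.sum_eq_zero (fun i _ => ?_)
    rw [← Finset.mul_sum]
    have h3 := h i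
    rw [dotProduct] at h3
    rw [h3, mul_zero]
  exact dotProduct_self_eq_zero.mp hzero

/-- Persistence of a nonsingular zero under the perturbation `P j + s • X j ^ D j`. -/
lemma persist (P : Fin d → MvPolynomial (Fin d) ℝ) (D : Fin d → ℕ) (a : Fin d → ℝ)
    (hz : ∀ j, eval a (P j) = 0)
    (hind : LinearIndependent ℝ (fun j : Fin d => fun i : Fin d => eval a (pderiv i (P j))))
    (ρ : ℝ) (hρ : 0 < ρ) :
    ∀ᶠ s : ℝ in nhds 0, ∃ y : Fin d → ℝ,
      (∀ j, eval y (P j + C s * X j ^ D j) = 0) ∧ dist y a < ρ := by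
  classical
  set Φ : ℝ × (Fin d → ℝ) → ℝ × (Fin d → ℝ) :=
    fun w => (w.1, fun j => eval w.2 (P j) + w.1 * (w.2 j) ^ (D j)) with hΦ
  set A₀ : (ℝ × (Fin d → ℝ)) →L[ℝ] (ℝ × (Fin d → ℝ)) :=
    (ContinuousLinearMap.fst ℝ ℝ (Fin d → ℝ)).prod
      (ContinuousLinearMap.pi fun j =>
        ((evalDeriv (P j) a).comp (ContinuousLinearMap.snd ℝ ℝ (Fin d → ℝ)))
          + ((a j ^ D j) • ContinuousLinearMap.fst ℝ ℝ (Fin d → ℝ))) with hA₀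
  have hderiv : HasStrictFDerivAt Φ A₀ (0, a) := by
    refine HasStrictFDerivAt.prodMk ?_ ?_
    · exact hasStrictFDerivAt_fst
    · refine hasStrictFDerivAt_pi'' ?_
      intro j
      have h1 : HasStrictFDerivAt (fun w : ℝ × (Fin d → ℝ) => eval w.2 (P j))
          ((evalDeriv (P j) a).comp (ContinuousLinearMap.snd ℝ ℝ (Fin d → ℝ))) (0, a) :=
        (hasStrictFDerivAt_mveval (P j) a).comp (f := Prod.snd) ((0:ℝ), a) hasStrictFDerivAt_snd
      have h2 : HasStrictFDerivAt (fun w : ℝ × (Fin d → ℝ) => (w.2 j) ^ (D j))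
          ((D j * a j ^ (D j - 1)) •
            ((ContinuousLinearMap.proj j).comp (ContinuousLinearMap.snd ℝ ℝ (Fin d → ℝ)))) (0, a) := by
        have hproj : HasStrictFDerivAt (fun w : ℝ × (Fin d → ℝ) => w.2 j)
            ((ContinuousLinearMap.proj j).comp (ContinuousLinearMap.snd ℝ ℝ (Fin d → ℝ))) (0, a) :=
          ((ContinuousLinearMap.proj j).comp (ContinuousLinearMap.snd ℝ ℝ (Fin d → ℝ))).hasStrictFDerivAt
        have hpow := (hasStrictDerivAt_pow (D j) (a j)).hasStrictFDerivAt
        have := hpow.comp ((0:ℝ), a) hproj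
        convert this using 1
        case e'_12 =>
          refine ContinuousLinearMap.ext fun w => ?_
          simp [ContinuousLinearMap.smulRight_apply]
          ring
        all_goals rfl
      have h3 : HasStrictFDerivAt (fun w : ℝ × (Fin d → ℝ) => w.1 * (w.2 j) ^ (D j))
          ((a j ^ D j) • ContinuousLinearMap.fst ℝ ℝ (Fin d → ℝ)) (0, a) := by
        have hfst : HasStrictFDerivAt (fun w : ℝ × (Fin d → ℝ) => w.1)
            (ContinuousLinearMap.fst ℝ ℝ (Fin d → ℝ)) (0, a) := hasStrictFDerivAt_fst
        have := hfst.mul h2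
        convert this using 1
        case e'_12 => simp
        all_goals rfl
      exact h1.add h3
  -- A₀ is invertible
  have hinj : Function.Injective A₀ := by
    intro w w' hww
    have h0 : ∀ u : ℝ × (Fin d → ℝ), A₀ u = 0 → u = 0 := by
      rintro ⟨u, v⟩ huv
      have h1 : u = 0 := congrArg Prod.fst huv
      subst h1
      have h2 : ∀ j, evalDeriv (P j) a v = 0 := by
        intro j
        have := congrFun (congrArg Prod.snd huv) j
        simpa [hA₀] using this
      have h3 : ∀ j, dotProduct (fun i => eval a (pderiv i (P j))) v = 0 := by
        intro j
        have := h2 j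
        rw [evalDeriv] at this
        simpa [dotProduct, ContinuousLinearMap.sum_apply] using this
      have := eq_zero_of_dot_rows _ hind v h3
      simp [this]
    have := h0 (w - w') (by rw [map_sub, hww, sub_self])
    exact sub_eq_zero.mp this
  have hsurj : Function.Surjective A₀ := by
    have := (LinearMap.injective_iff_surjective (f := A₀.toLinearMap)).mp hinj
    exact this
  set Ae : (ℝ × (Fin d → ℝ)) ≃ₗ[ℝ] (ℝ × (Fin d → ℝ)) :=
    LinearEquiv.ofBijective A₀.toLinearMap ⟨hinj, hsurj⟩ with hAe
  set Ace := Ae.toContinuousLinearEquiv with hAce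
  have hderiv' : HasStrictFDerivAt Φ (Ace : (ℝ × (Fin d → ℝ)) →L[ℝ] (ℝ × (Fin d → ℝ))) (0, a) := by
    have : (Ace : (ℝ × (Fin d → ℝ)) →L[ℝ] (ℝ × (Fin d → ℝ))) = A₀ :=
      ContinuousLinearMap.ext (fun x => rfl)
    rw [this]
    exact hderiv
  -- local inverse
  set g := hderiv'.localInverse Φ Ace (0, a) with hg
  have hΦa : Φ (0, a) = (0, 0) := by
    rw [hΦ]
    exact Prod.ext rfl (funext fun j => by simp [hz j])
  have hright : ∀ᶠ w in nhds ((0:ℝ), (0 : Fin d → ℝ)), Φ (g w) = w := by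
    have := hderiv'.eventually_right_inverse
    rwa [hΦa] at this
  have hcont : ContinuousAt g (0, 0) := by
    have := hderiv'.localInverse_continuousAt
    rwa [hΦa] at this
  have hgval : g (0, 0) = (0, a) := by
    have := hderiv'.localInverse_apply_image
    rwa [hΦa] at this
  have hclose : ∀ᶠ w in nhds ((0:ℝ), (0 : Fin d → ℝ)), dist (g w) (0, a) < ρ := by
    have htg : Filter.Tendsto g (nhds (0,0)) (nhds ((0:ℝ), a)) := by
      rw [← hgval]; exact hcont
    have hmem := htg (Metric.ball_mem_nhds ((0:ℝ), a) hρ)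
    exact Filter.eventually_of_mem hmem (fun w hw => by simpa [Metric.mem_ball] using hw)
  have hcomb := hright.and hclose
  -- pull back along s ↦ (s, 0)
  have htend : Filter.Tendsto (fun s : ℝ => ((s, 0) : ℝ × (Fin d → ℝ))) (nhds 0) (nhds (0, 0)) := by
    exact (Continuous.prodMk continuous_id continuous_const).tendsto' 0 (0,0) rfl
  filter_upwards [htend.eventually hcomb] with s hs
  obtain ⟨hs1, hs2⟩ := hs
  refine ⟨(g (s, 0)).2, ?_, ?_⟩
  · intro j
    have hfst : (g (s, 0)).1 = s := congrArg Prod.fst hs1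
    have hsnd := congrFun (congrArg Prod.snd hs1) j
    simp only [hΦ] at hsnd
    rw [hfst] at hsnd
    rw [eval_add, eval_mul, eval_C, eval_pow, eval_X]
    exact hsnd
  · calc dist (g (s,0)).2 a ≤ dist (g (s,0)) (0, a) := by
          rw [Prod.dist_eq]; exact le_max_right _ _
      _ < ρ := hs2

lemma sep_radius (T : Finset (Fin d → ℝ)) :
    ∃ ρ : ℝ, 0 < ρ ∧ ∀ x ∈ T, ∀ y ∈ T, x ≠ y → 2 * ρ ≤ dist x y := by
  classical
  set Q : Finset ℝ := ((T ×ˢ T).filter fun p => p.1 ≠ p.2).image (fun p => dist p.1 p.2) with hQ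
  by_cases hQe : Q = ∅
  · refine ⟨1, one_pos, fun x hx y hy hxy => ?_⟩
    exfalso
    have hmem : dist x y ∈ Q := Finset.mem_image.mpr ⟨(x, y), Finset.mem_filter.mpr
      ⟨Finset.mem_product.mpr ⟨hx, hy⟩, hxy⟩, rfl⟩
    rw [hQe] at hmem
    exact Finset.notMem_empty _ hmem
  · have hne : Q.Nonempty := Finset.nonempty_of_ne_empty hQe
    set m := Q.min' hne with hm
    have hmpos : 0 < m := by
      obtain ⟨r, hr⟩ := Finset.mem_image.mp (Q.min'_mem hne)
      obtain ⟨hrmem, hrne⟩ := Finset.mem_filter.mp hr.1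
      rw [hm] at *
      rw [← hr.2]
      exact dist_pos.mpr hrne
    refine ⟨m / 4, by linarith, fun x hx y hy hxy => ?_⟩
    have hmem : dist x y ∈ Q := Finset.mem_image.mpr ⟨(x, y), Finset.mem_filter.mpr
      ⟨Finset.mem_product.mpr ⟨hx, hy⟩, hxy⟩, rfl⟩
    have := Q.min'_le _ hmem
    linarith

theorem key_count (P : Fin d → MvPolynomial (Fin d) ℝ) (D : Fin d → ℕ)
    (hdeg : ∀ j, (P j).totalDegree = D j) (T : Finset (Fin d → ℝ))
    (hT : ∀ x ∈ T, (∀ j, eval x (P j) = 0) ∧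
      LinearIndependent ℝ (fun j : Fin d => fun i : Fin d => eval x (pderiv i (P j)))) :
    T.card ≤ ∏ j, D j := by
  classical
  rcases Finset.eq_empty_or_nonempty T with hTe | hTne
  · subst hTe; simp
  by_cases hd : d = 0
  · subst hd
    have hle : T.card ≤ 1 := Finset.card_le_one.mpr (fun a _ b _ => Subsingleton.elim a b)
    simpa using hle
  -- separation radius
  obtain ⟨ρ, hρpos, hsep⟩ := sep_radius T
  -- persistence, uniformly over T
  have hall : ∀ᶠ s : ℝ in nhds 0, ∀ a ∈ T, ∃ y : Fin d → ℝ,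
      (∀ j, eval y (P j + C s * X j ^ D j) = 0) ∧ dist y a < ρ := by
    rw [Filter.eventually_all_finset]
    intro a ha
    exact persist P D a (hT a ha).1 (hT a ha).2 ρ hρpos
  obtain ⟨ε, hεpos, hball⟩ := Metric.eventually_nhds_iff.mp hall
  -- the spanning polynomial certificate
  obtain ⟨q, hq0, hq⟩ := span_box P D (fun j => le_of_eq (hdeg j)) (T.card - 1)
  -- choose a good parameter s
  obtain ⟨s, hs⟩ : ∃ s : ℝ, s ∈ Set.Ioo (0:ℝ) ε ∧ ¬ q.IsRoot s := by
    have hinf : (Set.Ioo (0:ℝ) ε).Infinite := Set.infinite_coe_iff.mp (Set.Ioo.infinite hεpos)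
    obtain ⟨s, hs⟩ := (hinf.diff (Polynomial.finite_setOf_isRoot hq0)).nonempty
    exact ⟨s, hs.1, hs.2⟩
  have hsne : s ≠ 0 := ne_of_gt hs.1.1
  have hsq : q.eval s ≠ 0 := hs.2
  have hsdist : dist s 0 < ε := by
    rw [Real.dist_eq, sub_zero, abs_of_pos hs.1.1]; exact hs.1.2
  have hpts := hball hsdist
  choose y hy1 hy2 using hpts
  -- the perturbed points
  set T' : Finset (Fin d → ℝ) := T.attach.image (fun a => y a.1 a.2) with hT'
  have hinj : Set.InjOn (fun a : ↥T => y a.1 a.2) ↑T.attach := by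
    intro a _ b _ hab
    by_contra hne
    have hne' : a.1 ≠ b.1 := fun h => hne (Subtype.ext h)
    have h2 := hsep a.1 a.2 b.1 b.2 hne'
    have d1 := hy2 a.1 a.2
    have d2 := hy2 b.1 b.2
    have hab' : y a.1 a.2 = y b.1 b.2 := hab
    have : dist a.1 b.1 ≤ dist a.1 (y a.1 a.2) + dist (y b.1 b.2) b.1 := by
      calc dist a.1 b.1 ≤ dist a.1 (y a.1 a.2) + dist (y a.1 a.2) b.1 := dist_triangle _ _ _
        _ = dist a.1 (y a.1 a.2) + dist (y b.1 b.2) b.1 := by rw [hab']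
    rw [dist_comm a.1 (y a.1 a.2)] at this
    linarith
  have hcard' : T'.card = T.card := by
    rw [hT', Finset.card_image_of_injOn hinj, Finset.card_attach]
  -- apply the counting lemma
  have hcount := count_le T' D
    ((Ideal.span (Set.range fun j => P j + C s * X j ^ D j)).restrictScalars ℝ)
    (by
      intro g hg x hx
      rw [Submodule.restrictScalars_mem] at hg
      obtain ⟨a, ha, rfl⟩ := Finset.mem_image.mp hx
      have hker : Ideal.span (Set.range fun j => P j + C s * X j ^ D j) ≤
          RingHom.ker (eval (y a.1 a.2)) := by
        rw [Ideal.span_le]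
        rintro _ ⟨j, rfl⟩
        rw [SetLike.mem_coe, RingHom.mem_ker]
        exact hy1 a.1 a.2 j
      exact RingHom.mem_ker.mp (hker hg))
    (by
      intro f hf
      rw [hcard'] at hf
      exact hq s hsne hsq f hf)
  rw [hcard'] at hcount
  exact hcount

/-- The real Bézout theorem: if `P₁,…,P_d` are real polynomials in `d` variables
of degrees `D₁,…,D_d`, then the number of nonsingular intersection points of
their real zero sets (points where all `P_j` vanish and the gradients
`∇P₁,…,∇P_d` are linearly independent) is at most `D₁ ⋯ D_d`. -/
theorem stmt_10 (d : ℕ) (P : Fin d → MvPolynomial (Fin d) ℝ) (D : Fin d → ℕ)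
    (hdeg : ∀ j, (P j).totalDegree = D j) :
    {x : Fin d → ℝ | (∀ j, eval x (P j) = 0) ∧
        LinearIndependent ℝ (fun j : Fin d => fun i : Fin d =>
          eval x (pderiv i (P j)))}.Finite ∧
    {x : Fin d → ℝ | (∀ j, eval x (P j) = 0) ∧
        LinearIndependent ℝ (fun j : Fin d => fun i : Fin d =>
          eval x (pderiv i (P j)))}.ncard ≤ ∏ j, D j := by
  classical
  set S := {x : Fin d → ℝ | (∀ j, eval x (P j) = 0) ∧
      LinearIndependent ℝ (fun j : Fin d => fun i : Fin d =>
        eval x (pderiv i (P j)))} with hS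
  have hfin : ∀ T : Finset (Fin d → ℝ), ↑T ⊆ S → T.card ≤ ∏ j, D j := by
    intro T hT
    exact key_count P D hdeg T (fun x hx => hT hx)
  have hSfin : S.Finite := by
    by_contra hc
    have hSinf : S.Infinite := fun h => hc h
    obtain ⟨T, hTsub, hTcard⟩ := hSinf.exists_subset_card_eq ((∏ j, D j) + 1)
    have := hfin T hTsub
    omega
  refine ⟨hSfin, ?_⟩
  rw [Set.ncard_eq_toFinset_card S hSfin]
  exact hfin hSfin.toFinset (by rw [Set.Finite.coe_toFinset])
end
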